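/- Let r be a positive integer, and let A and B be N×r complex matrices satisfying the rank-r condition X·Z − Z·X − I_N = B·Aᵀ. Fix complex numbers x, y, y', w, z and suppose the N×N matrices X̃ = xI + 2yZ − X, Z̃ = zI − Z, and Ź = wI + (1−4yy')Z + 2y'X are all invertible. Then the r×r matrices satisfy (I_r + AᵀŹ⁻¹X̃⁻¹B)·(I_r + AᵀX̃⁻¹Z̃⁻¹B) = I_r + AᵀŹ⁻¹·((w+z+2xy')·X̃⁻¹ − 2y'·I_N − X̃⁻²)·Z̃⁻¹B. -/
import Mathlib


open Matrix

set_option maxHeartbeats 1600000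

/-- Auxiliary abstract form of the identity: if `T*M + M*S + C = c₁•M - c₂•(M*M) - 1`
and `C = B*Aᵀ`, with `M, T, S` invertible, then the `r×r` product identity holds. -/
theorem spin_aux {N r : ℕ} (M T S C : Matrix (Fin N) (Fin N) ℂ)
    (A B : Matrix (Fin N) (Fin r) ℂ) (c₁ c₂ : ℂ)
    (hM1 : M * M⁻¹ = 1) (hM2 : M⁻¹ * M = 1)
    (hT1 : T * T⁻¹ = 1) (hT2 : T⁻¹ * T = 1)
    (hS1 : S * S⁻¹ = 1) (hS2 : S⁻¹ * S = 1)
    (hC : C = B * Aᵀ)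
    (P : T * M + M * S + C = c₁ • M - c₂ • (M * M) - 1) :
    (1 + Aᵀ * S⁻¹ * M⁻¹ * B) * (1 + Aᵀ * M⁻¹ * T⁻¹ * B)
      = 1 + Aᵀ * S⁻¹ * (c₁ • M⁻¹ - c₂ • (1 : Matrix (Fin N) (Fin N) ℂ) - M⁻¹ * M⁻¹)
          * T⁻¹ * B := by
  have eM1 : ∀ Q : Matrix (Fin N) (Fin N) ℂ, M * (M⁻¹ * Q) = Q := fun Q => by
    rw [← mul_assoc, hM1, one_mul]
  have eM2 : ∀ Q : Matrix (Fin N) (Fin N) ℂ, M⁻¹ * (M * Q) = Q := fun Q => by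
    rw [← mul_assoc, hM2, one_mul]
  have eT1 : ∀ Q : Matrix (Fin N) (Fin N) ℂ, T * (T⁻¹ * Q) = Q := fun Q => by
    rw [← mul_assoc, hT1, one_mul]
  have eT2 : ∀ Q : Matrix (Fin N) (Fin N) ℂ, T⁻¹ * (T * Q) = Q := fun Q => by
    rw [← mul_assoc, hT2, one_mul]
  have eS1 : ∀ Q : Matrix (Fin N) (Fin N) ℂ, S * (S⁻¹ * Q) = Q := fun Q => by
    rw [← mul_assoc, hS1, one_mul]
  have eS2 : ∀ Q : Matrix (Fin N) (Fin N) ℂ, S⁻¹ * (S * Q) = Q := fun Q => by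
    rw [← mul_assoc, hS2, one_mul]
  have h1 : c₁ • M⁻¹ - c₂ • (1 : Matrix (Fin N) (Fin N) ℂ) - M⁻¹ * M⁻¹
      = M⁻¹ * ((c₁ • M - c₂ • (M * M) - 1) * M⁻¹) := by
    simp only [mul_sub, sub_mul, mul_smul_comm, smul_mul_assoc, mul_assoc, mul_one, one_mul,
      hM1, hM2, eM1, eM2]
  have G : S⁻¹ * M⁻¹ + M⁻¹ * T⁻¹ + S⁻¹ * (M⁻¹ * (B * Aᵀ * (M⁻¹ * T⁻¹)))
      = S⁻¹ * ((c₁ • M⁻¹ - c₂ • (1 : Matrix (Fin N) (Fin N) ℂ) - M⁻¹ * M⁻¹) * T⁻¹) := by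
    rw [h1, ← hC, ← P]
    simp only [mul_add, add_mul, mul_sub, sub_mul, mul_assoc, mul_one, one_mul,
      hM1, hM2, hT1, hT2, hS1, hS2, eM1, eM2, eT1, eT2, eS1, eS2]
  calc (1 + Aᵀ * S⁻¹ * M⁻¹ * B) * (1 + Aᵀ * M⁻¹ * T⁻¹ * B)
      = 1 + Aᵀ * ((S⁻¹ * M⁻¹ + M⁻¹ * T⁻¹ + S⁻¹ * (M⁻¹ * (B * Aᵀ * (M⁻¹ * T⁻¹)))) * B) := by
        simp only [Matrix.mul_add, Matrix.add_mul, Matrix.mul_one, Matrix.one_mul,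
          Matrix.mul_assoc]
        abel
    _ = 1 + Aᵀ * (S⁻¹ * ((c₁ • M⁻¹ - c₂ • (1 : Matrix (Fin N) (Fin N) ℂ) - M⁻¹ * M⁻¹)
          * T⁻¹) * B) := by rw [G]
    _ = 1 + Aᵀ * S⁻¹ * (c₁ • M⁻¹ - c₂ • (1 : Matrix (Fin N) (Fin N) ℂ) - M⁻¹ * M⁻¹)
          * T⁻¹ * B := by simp only [Matrix.mul_assoc]

/-- The spin-generalized (rank `r`) version of the key algebraic identity:
`(I_r + AᵀŹ⁻¹X̃⁻¹B)·(I_r + AᵀX̃⁻¹Z̃⁻¹B) = I_r + AᵀŹ⁻¹·((w+z+2xy')·X̃⁻¹ − 2y'·I_N − X̃⁻²)·Z̃⁻¹B`. -/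
theorem spin_rank_r_product_identity {N r : ℕ} (hN : 0 < N) (hr : 0 < r)
    (X Z : Matrix (Fin N) (Fin N) ℂ) (A B : Matrix (Fin N) (Fin r) ℂ)
    (hrank : X * Z - Z * X - 1 = B * Aᵀ)
    (x y y' w z : ℂ)
    (hX : IsUnit (x • (1 : Matrix (Fin N) (Fin N) ℂ) + (2 * y) • Z - X))
    (hZt : IsUnit (z • (1 : Matrix (Fin N) (Fin N) ℂ) - Z))
    (hZa : IsUnit (w • (1 : Matrix (Fin N) (Fin N) ℂ) + (1 - 4 * y * y') • Z + (2 * y') • X)) :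
    ((1 : Matrix (Fin r) (Fin r) ℂ)
        + Aᵀ * (w • (1 : Matrix (Fin N) (Fin N) ℂ) + (1 - 4 * y * y') • Z + (2 * y') • X)⁻¹
            * (x • (1 : Matrix (Fin N) (Fin N) ℂ) + (2 * y) • Z - X)⁻¹ * B) *
    ((1 : Matrix (Fin r) (Fin r) ℂ)
        + Aᵀ * (x • (1 : Matrix (Fin N) (Fin N) ℂ) + (2 * y) • Z - X)⁻¹
            * (z • (1 : Matrix (Fin N) (Fin N) ℂ) - Z)⁻¹ * B)
    = (1 : Matrix (Fin r) (Fin r) ℂ)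
        + Aᵀ * (w • (1 : Matrix (Fin N) (Fin N) ℂ) + (1 - 4 * y * y') • Z + (2 * y') • X)⁻¹
            * ((w + z + 2 * x * y') • (x • (1 : Matrix (Fin N) (Fin N) ℂ) + (2 * y) • Z - X)⁻¹
                - (2 * y') • (1 : Matrix (Fin N) (Fin N) ℂ)
                - (x • (1 : Matrix (Fin N) (Fin N) ℂ) + (2 * y) • Z - X)⁻¹
                  * (x • (1 : Matrix (Fin N) (Fin N) ℂ) + (2 * y) • Z - X)⁻¹)
            * (z • (1 : Matrix (Fin N) (Fin N) ℂ) - Z)⁻¹ * B := by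
  have P : (z • (1 : Matrix (Fin N) (Fin N) ℂ) - Z)
        * (x • (1 : Matrix (Fin N) (Fin N) ℂ) + (2 * y) • Z - X)
      + (x • (1 : Matrix (Fin N) (Fin N) ℂ) + (2 * y) • Z - X)
        * (w • (1 : Matrix (Fin N) (Fin N) ℂ) + (1 - 4 * y * y') • Z + (2 * y') • X)
      + (X * Z - Z * X - 1)
      = (w + z + 2 * x * y') • (x • (1 : Matrix (Fin N) (Fin N) ℂ) + (2 * y) • Z - X)
        - (2 * y') • ((x • (1 : Matrix (Fin N) (Fin N) ℂ) + (2 * y) • Z - X)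
            * (x • (1 : Matrix (Fin N) (Fin N) ℂ) + (2 * y) • Z - X)) - 1 := by
    simp only [smul_smul, mul_add, add_mul, sub_mul, mul_sub, smul_mul_assoc, mul_smul_comm,
      smul_add, smul_sub, mul_one, one_mul]
    module
  exact spin_aux _ _ _ _ A B _ _
    (mul_nonsing_inv _ ((isUnit_iff_isUnit_det _).mp hX))
    (nonsing_inv_mul _ ((isUnit_iff_isUnit_det _).mp hX))
    (mul_nonsing_inv _ ((isUnit_iff_isUnit_det _).mp hZt))
    (nonsing_inv_mul _ ((isUnit_iff_isUnit_det _).mp hZt))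
    (mul_nonsing_inv _ ((isUnit_iff_isUnit_det _).mp hZa))
    (nonsing_inv_mul _ ((isUnit_iff_isUnit_det _).mp hZa))
    hrank P
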